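/- Let H : ℕ → ℕ be the monotone function defined in the Ladner-style construction relative to the machine M_H and an enumeration (M_i) of clocked deterministic polynomial-time TMs. If the run fitting problem RF(M_H) is decidable in polynomial time, then H is eventually constant (H(n) = O(1)); and if RF(M_H) is not in PTime, then H(n) → ∞ as n → ∞. -/

import Mathlib

/-- A non-deterministic Turing machine with a single one-sided infinite tape.
`δ q a` is the set of transitions `(q', b, dir)` available in state `q` reading `a`
(`dir = true` means move right, `dir = false` move left). -/
structure NTM where
  Q : Type
  A : Type
  finQ : Finite Q
  finA : Finite A
  blank : A
  q0 : Q
  qa : Q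
  δ : Q → A → Set (Q × A × Bool)

namespace NTM

/-- Symbols occurring in the string representation `vqw` of configurations. -/
abbrev Sym (M : NTM) : Type := M.Q ⊕ M.A

variable (M : NTM)

/-- One computation step on string representations of configurations (length preserving). -/
inductive Step : List M.Sym → List M.Sym → Prop
  | right (u v : List M.Sym) (q q' : M.Q) (a b : M.A)
      (h : (q', b, true) ∈ M.δ q a) :
      Step (u ++ [Sum.inl q, Sum.inr a] ++ v) (u ++ [Sum.inr b, Sum.inl q'] ++ v)
  | left (u v : List M.Sym) (q q' : M.Q) (a b c : M.A)
      (h : (q', b, false) ∈ M.δ q a) :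
      Step (u ++ [Sum.inr c, Sum.inl q, Sum.inr a] ++ v)
           (u ++ [Sum.inl q', Sum.inr c, Sum.inr b] ++ v)

/-- A string over `Sym` is a configuration if it contains exactly one state symbol. -/
def IsConfig (l : List M.Sym) : Prop := (l.filter Sum.isLeft).length = 1

/-- A run of `M`: a nonempty sequence of configurations, each obtained from the previous
one by a computation step (all configurations have the same length). -/
def IsRun (cs : List (List M.Sym)) : Prop :=
  cs ≠ [] ∧ (∀ c ∈ cs, M.IsConfig c) ∧ cs.Chain' M.Step

/-- A run is accepting if its last configuration contains the accepting state. -/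
def Accepting (cs : List (List M.Sym)) : Prop :=
  ∃ c, cs.getLast? = some c ∧ Sum.inl M.qa ∈ c

/-- A partial configuration: a string over `Sym ∪ {⋆}` (`⋆ = none`) with at most one
state symbol. -/
def IsPConfig (l : List (Option M.Sym)) : Prop :=
  (l.filter fun s => (s.map Sum.isLeft).getD false).length ≤ 1

/-- A configuration matches a partial configuration if they have the same length and agree
on all non-wildcard positions. -/
def MatchesC (c : List M.Sym) (p : List (Option M.Sym)) : Prop :=
  List.Forall₂ (fun s o => ∀ s' : M.Sym, o = some s' → s' = s) c p

/-- A partial run: a nonempty sequence of partial configurations of equal length whose first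
element starts with the initial state and contains no other state symbol. -/
def IsPRun (ps : List (List (Option M.Sym))) : Prop :=
  ps ≠ [] ∧ (∀ p ∈ ps, M.IsPConfig p) ∧ (∀ p ∈ ps, ∀ p' ∈ ps, p.length = p'.length) ∧
  ∃ rest, ps.head? = some (some (Sum.inl M.q0) :: rest) ∧
    ∀ s ∈ rest, ∀ q : M.Q, s ≠ some (Sum.inl q)

/-- A run matches a partial run if they have the same length and corresponding
configurations match. -/
def MatchesRun (cs : List (List M.Sym)) (ps : List (List (Option M.Sym))) : Prop :=
  List.Forall₂ M.MatchesC cs ps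

/-- The run fitting problem for `M` (as a set of partial runs): decide whether a given
partial run of `M` is matched by some accepting run of `M`. -/
def RFit (ps : List (List (Option M.Sym))) : Prop :=
  M.IsPRun ps ∧ ∃ cs, M.IsRun cs ∧ M.Accepting cs ∧ M.MatchesRun cs ps

/-- Encoding of a partial run as a string, using a fresh separator symbol. -/
def encPR (ps : List (List (Option M.Sym))) : List (Option M.Sym ⊕ Unit) :=
  List.intercalate [Sum.inr ()] (ps.map (List.map Sum.inl))

/-- The run fitting problem for `M` as a formal language. -/
def RFLang : Set (List (Option M.Sym ⊕ Unit)) :=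
  { w | ∃ ps, M.RFit ps ∧ w = M.encPR ps }

/-- The initial configuration on input `x` (via the injection `ι` of the input alphabet into
the tape alphabet), padded with `space` blanks. -/
def initConfig {A' : Type} (ι : A' → M.A) (x : List A') (space : ℕ) : List M.Sym :=
  Sum.inl M.q0 :: (x.map fun a => Sum.inr (ι a)) ++ List.replicate space (Sum.inr M.blank)

/-- `M` accepts `x` within `t` steps (and `t` extra tape cells). -/
def AcceptsIn {A' : Type} (ι : A' → M.A) (x : List A') (t : ℕ) : Prop :=
  ∃ cs, M.IsRun cs ∧ cs.head? = some (M.initConfig ι x t) ∧ cs.length ≤ t + 1 ∧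
    M.Accepting cs

end NTM

/-- A Turing machine is deterministic if each state/symbol pair admits at most one
transition. -/
def NTM.Deterministic (M : NTM) : Prop := ∀ q a, (M.δ q a).Subsingleton

/-- A language is in PTime if it is accepted by a deterministic Turing machine in
polynomial time. -/
def InP {A' : Type} (L : Set (List A')) : Prop :=
  ∃ M : NTM, M.Deterministic ∧ ∃ ι : A' → M.A, Function.Injective ι ∧ ∃ p : Polynomial ℕ,
    ∀ x, x ∈ L ↔ M.AcceptsIn ι x (p.eval x.length)

/-- Let `M_H` be the machine of the Ladner-style construction, `RF = RF(M_H)` its run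
fitting problem, and `Lang i = L(M_i)` the languages of a polynomial-time enumeration
`(M_i)` of clocked deterministic polynomial-time Turing machines (so each `Lang i` is in
PTime, and every PTime language occurs as `Lang i` for infinitely many `i`).  Let
`H : ℕ → ℕ` be the monotone function with `H n` the least `i < log log n` such that `M_i`
agrees with `RF(M_H)` on all strings of length at most `log n`, and `H n = log log n` if no
such `i` exists.  Then: if `RF(M_H)` is in PTime, `H` is bounded (`H(n) = O(1)`); and if
`RF(M_H)` is not in PTime, then `H(n) → ∞` as `n → ∞`. -/
theorem stmt4 (MH : NTM) (Lang : ℕ → Set (List (Option MH.Sym ⊕ Unit))) (H : ℕ → ℕ)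
    (hMono : Monotone H)
    (hLangP : ∀ i, InP (Lang i))
    (hEnum : ∀ L : Set (List (Option MH.Sym ⊕ Unit)), InP L → {i | Lang i = L}.Infinite)
    (hH : ∀ n, H n = sInf ({i | i < Nat.log 2 (Nat.log 2 n) ∧
        ∀ z : List (Option MH.Sym ⊕ Unit), z.length ≤ Nat.log 2 n →
          (z ∈ Lang i ↔ z ∈ MH.RFLang)} ∪ {Nat.log 2 (Nat.log 2 n)})) :
    (InP MH.RFLang → ∃ C, ∀ n, H n ≤ C) ∧
    (¬ InP MH.RFLang → Filter.Tendsto H Filter.atTop Filter.atTop) := by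
  constructor
  · rintro hIn
    obtain ⟨i, hi⟩ := (hEnum _ hIn).nonempty
    refine ⟨i, fun n => ?_⟩
    rw [hH n]
    by_cases hc : i < Nat.log 2 (Nat.log 2 n)
    · exact Nat.sInf_le (Or.inl ⟨hc, fun z _ => by rw [hi]⟩)
    · exact le_trans (Nat.sInf_le (Or.inr rfl)) (le_of_not_gt hc)
  · intro hNin
    refine hMono.tendsto_atTop_atTop ?_
    by_contra hb
    push_neg at hb
    obtain ⟨b, hb⟩ := hb
    have hbdd : BddAbove (Set.range H) := ⟨b, by rintro _ ⟨n, rfl⟩; exact (hb n).le⟩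
    obtain ⟨N, hN⟩ : ∃ N, H N = sSup (Set.range H) :=
      Nat.sSup_mem (s := Set.range H) ⟨H 0, ⟨0, rfl⟩⟩ hbdd
    set v := sSup (Set.range H) with hv
    have hconst : ∀ n, N ≤ n → H n = v := fun n hn =>
      le_antisymm (le_csSup hbdd ⟨n, rfl⟩) (hN ▸ hMono hn)
    have hag : Lang v = MH.RFLang := by
      ext z
      set m := max (max z.length (v+1)) N with hm
      set n := 2 ^ (2 ^ m) with hn2
      have h1 : Nat.log 2 n = 2 ^ m := Nat.log_pow one_lt_two _
      have h2 : Nat.log 2 (Nat.log 2 n) = m := by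
        rw [h1]; exact Nat.log_pow one_lt_two _
      have hmm : m ≤ 2 ^ m := Nat.le_of_lt (Nat.lt_two_pow_self (n := m))
      have hNn : N ≤ n := le_trans (le_max_right _ _) (le_trans hmm
        (Nat.pow_le_pow_right two_pos hmm))
      have hHn : H n = v := hconst n hNn
      have hmem : v ∈ ({i | i < Nat.log 2 (Nat.log 2 n) ∧
          ∀ z : List (Option MH.Sym ⊕ Unit), z.length ≤ Nat.log 2 n →
            (z ∈ Lang i ↔ z ∈ MH.RFLang)} ∪ {Nat.log 2 (Nat.log 2 n)}) := by
        rw [← hHn, hH n]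
        exact Nat.sInf_mem ⟨_, Or.inr rfl⟩
      have hvlt : v < Nat.log 2 (Nat.log 2 n) := by
        rw [h2]
        exact lt_of_lt_of_le (Nat.lt_succ_self v)
          (le_trans (le_max_right _ _) (le_max_left _ _))
      rcases hmem with h | h
      · exact h.2 z (by
          rw [h1]
          exact le_trans (le_max_left _ _) (le_trans (le_max_left _ _) hmm))
      · exact absurd h (by simp [h2]; omega)
    exact hNin (hag ▸ hLangP v)
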